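/- arXiv:2312.04883 — 3 statements merged into one kernel-verified Lean document; each statement's English description precedes it below -/
import Mathlib

section
/- Let V be a finite set partitioned into two disjoint classes C1 and C2, let f : V → ℝ^d, and let s ≥ 1. Let 𝒫 be a probability distribution over partitions of V into clusters each of size exactly s. Assume there are constants q1, q2, q12 such that: for every pair of distinct nodes u, v ∈ C1 the probability (under 𝒫) that u and v lie in the same cluster equals q1; for every pair of distinct nodes u, v ∈ C2 this probability equals q2; and for every u ∈ C1 and v ∈ C2 this probability equals q12. Then E_{P∼𝒫} [ Σ_{S_i ∈ P} Σ_{u ∈ S_i} s·‖f(u) − f(S_i)‖² ] = q1 · Σ_{unordered pairs {u,v} ⊆ C1, u≠v} ‖f(u) − f(v)‖² + q2 · Σ_{unordered pairs {u,v} ⊆ C2, u≠v} ‖f(u) − f(v)‖² + q12 · Σ_{u ∈ C1, v ∈ C2} ‖f(u) − f(v)‖², where f(S_i) = (1/s) Σ_{v ∈ S_i} f(v) is the centroid of cluster S_i. -/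
open Finset

lemma percluster {V : Type*} [DecidableEq V] {E : Type*}
    [NormedAddCommGroup E] [InnerProductSpace ℝ E]
    (f : V → E) (s : ℕ) (hs : 1 ≤ s) (S : Finset V) (hcard : S.card = s) :
    ∑ u ∈ S, (s : ℝ) * ‖f u - (s : ℝ)⁻¹ • ∑ v ∈ S, f v‖ ^ 2
      = (1 / 2) * ∑ u ∈ S, ∑ v ∈ S, ‖f u - f v‖ ^ 2 := by
  have hs0 : (s : ℝ) ≠ 0 := by positivity
  set m : E := ∑ v ∈ S, f v with hm
  have key1 : ∀ u, ‖f u - (s : ℝ)⁻¹ • m‖ ^ 2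
      = ‖f u‖ ^ 2 - 2 * (s : ℝ)⁻¹ * inner ℝ (f u) m + ((s : ℝ)⁻¹) ^ 2 * ‖m‖ ^ 2 := by
    intro u
    rw [norm_sub_sq_real, real_inner_smul_right, norm_smul]
    rw [Real.norm_eq_abs, abs_of_nonneg (by positivity)]
    ring
  have key2 : ∀ u v : V, ‖f u - f v‖ ^ 2
      = ‖f u‖ ^ 2 + ‖f v‖ ^ 2 - 2 * inner ℝ (f u) (f v) := by
    intro u v; rw [norm_sub_sq_real]; ring
  have hsum_inner : ∑ u ∈ S, (inner ℝ (f u) m : ℝ) = ‖m‖ ^ 2 := by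
    rw [← sum_inner, ← hm, real_inner_self_eq_norm_sq]
  have hinner_sum : ∀ u, ∑ v ∈ S, (inner ℝ (f u) (f v) : ℝ) = inner ℝ (f u) m := by
    intro u; rw [hm, inner_sum]
  calc ∑ u ∈ S, (s : ℝ) * ‖f u - (s : ℝ)⁻¹ • m‖ ^ 2
      = ∑ u ∈ S, ((s : ℝ) * ‖f u‖ ^ 2 - 2 * inner ℝ (f u) m + (s : ℝ)⁻¹ * ‖m‖ ^ 2) := by
        refine sum_congr rfl fun u _ => ?_
        rw [key1]; field_simp
    _ = (s : ℝ) * ∑ u ∈ S, ‖f u‖ ^ 2 - 2 * ‖m‖ ^ 2 + ‖m‖ ^ 2 := by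
        rw [sum_add_distrib, sum_sub_distrib, ← mul_sum, ← mul_sum, hsum_inner,
          sum_const, hcard, nsmul_eq_mul, mul_inv_cancel_left₀ hs0]
    _ = (1 / 2) * ∑ u ∈ S, ∑ v ∈ S, ‖f u - f v‖ ^ 2 := by
        have : ∑ u ∈ S, ∑ v ∈ S, ‖f u - f v‖ ^ 2
            = ∑ u ∈ S, ((s : ℝ) * ‖f u‖ ^ 2 + (∑ v ∈ S, ‖f v‖ ^ 2)
                - 2 * inner ℝ (f u) m) := by
          refine sum_congr rfl fun u _ => ?_
          simp only [key2]
          rw [sum_sub_distrib, sum_add_distrib, ← mul_sum, hinner_sum, sum_const,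
            hcard, nsmul_eq_mul]
        rw [this, sum_sub_distrib, sum_add_distrib, ← mul_sum, ← mul_sum, hsum_inner,
          sum_const, hcard, nsmul_eq_mul]
        ring

lemma pointwise_id {V : Type*} [Fintype V] [DecidableEq V] {E : Type*}
    [NormedAddCommGroup E] [InnerProductSpace ℝ E]
    (f : V → E) (s : ℕ) (hs : 1 ≤ s) (P : V → Finset V)
    (hcl : ∀ u v, v ∈ P u ↔ P u = P v) (hcard : ∀ u, (P u).card = s) :
    ∑ u : V, (s : ℝ) * ‖f u - (s : ℝ)⁻¹ • ∑ v ∈ P u, f v‖ ^ 2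
      = (1 / 2) * ∑ u : V, ∑ v ∈ P u, ‖f u - f v‖ ^ 2 := by
  have hfiber : ∀ S ∈ Finset.univ.image P,
      Finset.univ.filter (fun u => P u = S) = S := by
    intro S hS
    obtain ⟨u₀, -, rfl⟩ := Finset.mem_image.mp hS
    ext u
    simp only [mem_filter, mem_univ, true_and]
    constructor
    · intro h; exact (hcl u₀ u).mpr h.symm
    · intro h; exact ((hcl u₀ u).mp h).symm
  have hmaps : ∀ u : V, u ∈ (Finset.univ : Finset V) →
      P u ∈ Finset.univ.image P := fun u _ => Finset.mem_image_of_mem P (mem_univ u)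
  have hPeq : ∀ S ∈ Finset.univ.image P, ∀ u ∈ S, P u = S := by
    intro S hS u hu
    have := hfiber S hS
    rw [← this] at hu
    exact (mem_filter.mp hu).2
  rw [← Finset.sum_fiberwise_of_maps_to hmaps
      (fun u => (s : ℝ) * ‖f u - (s : ℝ)⁻¹ • ∑ v ∈ P u, f v‖ ^ 2),
    ← Finset.sum_fiberwise_of_maps_to hmaps
      (fun u => ∑ v ∈ P u, ‖f u - f v‖ ^ 2), Finset.mul_sum]
  refine sum_congr rfl fun S hS => ?_
  rw [hfiber S hS]
  have hSc : S.card = s := by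
    obtain ⟨u₀, -, rfl⟩ := Finset.mem_image.mp hS; exact hcard u₀
  calc ∑ u ∈ S, (s : ℝ) * ‖f u - (s : ℝ)⁻¹ • ∑ v ∈ P u, f v‖ ^ 2
      = ∑ u ∈ S, (s : ℝ) * ‖f u - (s : ℝ)⁻¹ • ∑ v ∈ S, f v‖ ^ 2 :=
        sum_congr rfl fun u hu => by rw [hPeq S hS u hu]
    _ = (1 / 2) * ∑ u ∈ S, ∑ v ∈ S, ‖f u - f v‖ ^ 2 := percluster f s hs S hSc
    _ = (1 / 2) * ∑ u ∈ S, ∑ v ∈ P u, ‖f u - f v‖ ^ 2 := by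
        congr 1; exact sum_congr rfl fun u hu => by rw [hPeq S hS u hu]

/-- Let `V` be a finite set partitioned into two disjoint classes `C1` and
`C2`, `f : V → ℝ^d`, and `s ≥ 1`. Let `𝒫` be a probability distribution (modeled by a finite
sample space `Ω` with weights `w`) over partitions of `V` into clusters of size exactly `s`;
the partition at sample `ω` is encoded by `part ω u`, the cluster containing `u`.
If the probability that two distinct nodes of `C1` lie in the same cluster is `q1`, the
probability for two distinct nodes of `C2` is `q2`, and the probability for a node of `C1`
and a node of `C2` is `q12`, then
`E[ Σ_{clusters S_i} Σ_{u ∈ S_i} s‖f(u) − f(S_i)‖² ]`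
(the inner double sum equals `Σ_{u ∈ V}` since the clusters partition `V`)
equals `q1·Σ_{unordered pairs in C1} + q2·Σ_{unordered pairs in C2} + q12·Σ_{C1×C2}` of
squared embedding distances; unordered distinct-pair sums are written as half the
corresponding ordered off-diagonal sums. -/
theorem stmt0 {V : Type*} [Fintype V] [DecidableEq V] {d : ℕ}
    (f : V → EuclideanSpace ℝ (Fin d))
    (C1 C2 : Finset V) (hdisj : Disjoint C1 C2) (hunion : C1 ∪ C2 = Finset.univ)
    (s : ℕ) (hs : 1 ≤ s)
    {Ω : Type*} [Fintype Ω] (w : Ω → ℝ)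
    (hw0 : ∀ ω, 0 ≤ w ω) (hw1 : ∑ ω, w ω = 1)
    (part : Ω → V → Finset V)
    (hmem : ∀ ω u, u ∈ part ω u)
    (hcluster : ∀ ω u v, v ∈ part ω u ↔ part ω u = part ω v)
    (hcard : ∀ ω u, (part ω u).card = s)
    (q1 q2 q12 : ℝ)
    (hq1 : ∀ u ∈ C1, ∀ v ∈ C1, u ≠ v →
      ∑ ω, w ω * (if v ∈ part ω u then (1 : ℝ) else 0) = q1)
    (hq2 : ∀ u ∈ C2, ∀ v ∈ C2, u ≠ v →
      ∑ ω, w ω * (if v ∈ part ω u then (1 : ℝ) else 0) = q2)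
    (hq12 : ∀ u ∈ C1, ∀ v ∈ C2,
      ∑ ω, w ω * (if v ∈ part ω u then (1 : ℝ) else 0) = q12) :
    ∑ ω, w ω * ∑ u : V, (s : ℝ) * ‖f u - (s : ℝ)⁻¹ • ∑ v ∈ part ω u, f v‖ ^ 2
      = q1 * ((1 / 2) * ∑ p ∈ C1.offDiag, ‖f p.1 - f p.2‖ ^ 2)
        + q2 * ((1 / 2) * ∑ p ∈ C2.offDiag, ‖f p.1 - f p.2‖ ^ 2)
        + q12 * ∑ u ∈ C1, ∑ v ∈ C2, ‖f u - f v‖ ^ 2 := by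
  classical
  set Q : V → V → ℝ := fun u v => ∑ ω, w ω * (if v ∈ part ω u then (1 : ℝ) else 0)
    with hQ
  have hQdef : ∀ u v, Q u v = ∑ ω, w ω * (if v ∈ part ω u then (1 : ℝ) else 0) :=
    fun _ _ => rfl
  -- symmetry of membership
  have hsym : ∀ ω u v, (v ∈ part ω u) ↔ (u ∈ part ω v) := by
    intro ω u v
    rw [hcluster ω u v, hcluster ω v u, eq_comm]
  -- Step 1: rewrite LHS as (1/2) ∑_u ∑_v Q u v * ‖f u - f v‖²
  have step1 : ∑ ω, w ω * ∑ u : V, (s : ℝ) * ‖f u - (s : ℝ)⁻¹ • ∑ v ∈ part ω u, f v‖ ^ 2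
      = (1 / 2) * ∑ u : V, ∑ v : V, Q u v * ‖f u - f v‖ ^ 2 := by
    have h1 : ∀ ω, ∑ u : V, (s : ℝ) * ‖f u - (s : ℝ)⁻¹ • ∑ v ∈ part ω u, f v‖ ^ 2
        = (1 / 2) * ∑ u : V, ∑ v : V,
            (if v ∈ part ω u then (1 : ℝ) else 0) * ‖f u - f v‖ ^ 2 := by
      intro ω
      rw [pointwise_id f s hs (part ω) (hcluster ω) (hcard ω)]
      congr 1
      refine sum_congr rfl fun u _ => ?_
      simp only [ite_mul, one_mul, zero_mul, Finset.sum_ite_mem, Finset.univ_inter]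
    calc ∑ ω, w ω * ∑ u : V, (s : ℝ) * ‖f u - (s : ℝ)⁻¹ • ∑ v ∈ part ω u, f v‖ ^ 2
        = ∑ ω, ∑ u : V, ∑ v : V,
            (1 / 2) * (w ω * (if v ∈ part ω u then (1 : ℝ) else 0) * ‖f u - f v‖ ^ 2) := by
          refine sum_congr rfl fun ω _ => ?_
          rw [h1 ω]
          simp only [Finset.mul_sum]
          exact sum_congr rfl fun u _ => sum_congr rfl fun v _ => by ring
      _ = ∑ u : V, ∑ v : V, ∑ ω,
            (1 / 2) * (w ω * (if v ∈ part ω u then (1 : ℝ) else 0) * ‖f u - f v‖ ^ 2) := by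
          rw [Finset.sum_comm]
          exact sum_congr rfl fun u _ => Finset.sum_comm
      _ = (1 / 2) * ∑ u : V, ∑ v : V, Q u v * ‖f u - f v‖ ^ 2 := by
          simp only [hQdef, Finset.mul_sum, Finset.sum_mul]
          try exact sum_congr rfl fun u _ => sum_congr rfl fun v _ =>
            sum_congr rfl fun ω _ => by ring
  rw [step1]
  -- Step 2: split the double sum over C1/C2
  have hvdisj : Disjoint C1 C2 := hdisj
  have hsplit : ∀ g : V → ℝ, ∑ u : V, g u = ∑ u ∈ C1, g u + ∑ u ∈ C2, g u := by
    intro g; rw [← hunion, Finset.sum_union hdisj]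
  rw [hsplit (fun u => ∑ v : V, Q u v * ‖f u - f v‖ ^ 2)]
  simp only [hsplit (fun v => Q _ v * ‖f _ - f v‖ ^ 2)]
  rw [Finset.sum_add_distrib, Finset.sum_add_distrib]
  -- Pieces
  have hA11 : ∑ u ∈ C1, ∑ v ∈ C1, Q u v * ‖f u - f v‖ ^ 2
      = q1 * ∑ p ∈ C1.offDiag, ‖f p.1 - f p.2‖ ^ 2 := by
    rw [← Finset.sum_product', ← Finset.diag_union_offDiag C1,
      Finset.sum_union (Finset.disjoint_diag_offDiag C1)]
    have hdiag : ∑ p ∈ C1.diag, Q p.1 p.2 * ‖f p.1 - f p.2‖ ^ 2 = 0 := by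
      rw [Finset.sum_diag]
      exact Finset.sum_eq_zero fun a _ => by simp
    rw [hdiag, zero_add, Finset.mul_sum]
    refine sum_congr rfl fun p hp => ?_
    obtain ⟨h1, h2, hne⟩ := Finset.mem_offDiag.mp hp
    rw [hQdef, hq1 p.1 h1 p.2 h2 hne]
  have hA22 : ∑ u ∈ C2, ∑ v ∈ C2, Q u v * ‖f u - f v‖ ^ 2
      = q2 * ∑ p ∈ C2.offDiag, ‖f p.1 - f p.2‖ ^ 2 := by
    rw [← Finset.sum_product', ← Finset.diag_union_offDiag C2,
      Finset.sum_union (Finset.disjoint_diag_offDiag C2)]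
    have hdiag : ∑ p ∈ C2.diag, Q p.1 p.2 * ‖f p.1 - f p.2‖ ^ 2 = 0 := by
      rw [Finset.sum_diag]
      exact Finset.sum_eq_zero fun a _ => by simp
    rw [hdiag, zero_add, Finset.mul_sum]
    refine sum_congr rfl fun p hp => ?_
    obtain ⟨h1, h2, hne⟩ := Finset.mem_offDiag.mp hp
    rw [hQdef, hq2 p.1 h1 p.2 h2 hne]
  have hA12 : ∑ u ∈ C1, ∑ v ∈ C2, Q u v * ‖f u - f v‖ ^ 2
      = q12 * ∑ u ∈ C1, ∑ v ∈ C2, ‖f u - f v‖ ^ 2 := by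
    rw [Finset.mul_sum]
    refine sum_congr rfl fun u hu => ?_
    rw [Finset.mul_sum]
    refine sum_congr rfl fun v hv => ?_
    rw [hQdef, hq12 u hu v hv]
  have hA21 : ∑ u ∈ C2, ∑ v ∈ C1, Q u v * ‖f u - f v‖ ^ 2
      = q12 * ∑ u ∈ C1, ∑ v ∈ C2, ‖f u - f v‖ ^ 2 := by
    have : ∑ u ∈ C2, ∑ v ∈ C1, Q u v * ‖f u - f v‖ ^ 2
        = ∑ v ∈ C1, ∑ u ∈ C2, Q v u * ‖f v - f u‖ ^ 2 := by
      rw [Finset.sum_comm]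
      refine sum_congr rfl fun v _ => sum_congr rfl fun u _ => ?_
      have hQsym : Q u v = Q v u := by
        rw [hQdef, hQdef]
        refine sum_congr rfl fun ω _ => ?_
        congr 1
        simp [hsym ω u v]
      rw [hQsym, norm_sub_rev]
    rw [this, Finset.mul_sum]
    refine sum_congr rfl fun v hv => ?_
    rw [Finset.mul_sum]
    refine sum_congr rfl fun u hu => ?_
    rw [hQdef, hq12 v hv u hu]
  rw [hA11, hA12, hA21, hA22]
  ring
end

section
/- Let 0 < σ1 < σ2 and μ ∈ ℝ. For the two-class 1-dimensional QDA rule with class 1 = N(μ, σ1²) and class 2 = N(μ, σ2²), the probability that a sample drawn from class 1 is misclassified equals the standard Gaussian tail probability p1 = N(μ, σ1²)({ x : s_2(x) > s_1(x) }) = N(0, 1)({ z : z² > 2σ2² · log(σ2/σ1) / (σ2² − σ1²) }). -/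
open ProbabilityTheory MeasureTheory

lemma gauss_aux (σ1 μ : ℝ) (h1 : 0 < σ1) :
    (gaussianReal 0 1).map (fun z => σ1 * z + μ) = gaussianReal μ ⟨σ1 ^ 2, sq_nonneg σ1⟩ := by
  have : (fun z : ℝ => σ1 * z + μ) = (fun y : ℝ => y + μ) ∘ (fun z : ℝ => σ1 * z) := rfl
  rw [this, ← Measure.map_map (by fun_prop) (by fun_prop)]
  rw [gaussianReal_map_const_mul, gaussianReal_map_add_const]
  simp
  exact congrArg _ (NNReal.eq rfl)

/-- Let `0 < σ1 < σ2` and `μ ∈ ℝ`. For the two-class 1-dimensional QDA rule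
with class 1 = `N(μ, σ1²)` and class 2 = `N(μ, σ2²)` (discriminant score of class `c` being
`s_c(x) = −log σ_c − (x−μ)²/(2σ_c²)`), the probability that a sample drawn from class 1 is
misclassified equals the standard Gaussian tail probability
`p1 = N(μ, σ1²)({x : s_2(x) > s_1(x)}) = N(0,1)({z : z² > 2σ2²·log(σ2/σ1)/(σ2² − σ1²)})`. -/
theorem stmt4 (σ1 σ2 μ : ℝ) (h1 : 0 < σ1) (h12 : σ1 < σ2) :
    gaussianReal μ ⟨σ1 ^ 2, sq_nonneg σ1⟩
        {x : ℝ | -Real.log σ2 - (x - μ) ^ 2 / (2 * σ2 ^ 2)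
            > -Real.log σ1 - (x - μ) ^ 2 / (2 * σ1 ^ 2)}
      = gaussianReal 0 1
          {z : ℝ | z ^ 2 > 2 * σ2 ^ 2 * Real.log (σ2 / σ1) / (σ2 ^ 2 - σ1 ^ 2)} := by
  have h2 : 0 < σ2 := h1.trans h12
  rw [← gauss_aux σ1 μ h1,
    Measure.map_apply (by fun_prop) (by
      apply measurableSet_lt <;> fun_prop)]
  congr 1
  ext z
  simp only [Set.mem_preimage, Set.mem_setOf_eq, gt_iff_lt]
  have hd : 0 < σ2 ^ 2 - σ1 ^ 2 := by nlinarith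
  rw [Real.log_div h2.ne' h1.ne', div_lt_iff₀ hd]
  have hx : (σ1 * z + μ - μ) ^ 2 = σ1 ^ 2 * z ^ 2 := by ring
  rw [hx]
  constructor
  · intro h
    have := sub_pos.mpr h
    have h' : Real.log σ2 - Real.log σ1 <
        σ1 ^ 2 * z ^ 2 / (2 * σ1 ^ 2) - σ1 ^ 2 * z ^ 2 / (2 * σ2 ^ 2) := by linarith
    rw [div_sub_div _ _ (by positivity) (by positivity)] at h'
    rw [lt_div_iff₀ (by positivity)] at h'
    nlinarith [sq_nonneg σ1, sq_nonneg σ2]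
  · intro h
    have h' : Real.log σ2 - Real.log σ1 <
        σ1 ^ 2 * z ^ 2 / (2 * σ1 ^ 2) - σ1 ^ 2 * z ^ 2 / (2 * σ2 ^ 2) := by
      rw [div_sub_div _ _ (by positivity) (by positivity), lt_div_iff₀ (by positivity)]
      nlinarith [mul_lt_mul_of_pos_left h (by positivity : (0:ℝ) < 2 * σ1 ^ 2)]
    linarith
end

section
/- Let 0 < σ1 < σ2 and μ ∈ ℝ. For the two-class 1-dimensional QDA rule with class 1 = N(μ, σ1²) and class 2 = N(μ, σ2²), the probability that a sample drawn from class 2 is misclassified equals p2 = N(μ, σ2²)({ x : s_1(x) > s_2(x) }) = N(0, 1)({ z : z² < 2σ1² · log(σ2/σ1) / (σ2² − σ1²) }). -/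
open ProbabilityTheory

/-- Let `0 < σ1 < σ2` and `μ ∈ ℝ`. For the two-class 1-dimensional QDA rule
with class 1 = `N(μ, σ1²)` and class 2 = `N(μ, σ2²)` (discriminant score of class `c` being
`s_c(x) = −log σ_c − (x−μ)²/(2σ_c²)`), the probability that a sample drawn from class 2 is
misclassified equals
`p2 = N(μ, σ2²)({x : s_1(x) > s_2(x)}) = N(0,1)({z : z² < 2σ1²·log(σ2/σ1)/(σ2² − σ1²)})`. -/
theorem stmt5 (σ1 σ2 μ : ℝ) (h1 : 0 < σ1) (h12 : σ1 < σ2) :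
    gaussianReal μ ⟨σ2 ^ 2, sq_nonneg σ2⟩
        {x : ℝ | -Real.log σ1 - (x - μ) ^ 2 / (2 * σ1 ^ 2)
            > -Real.log σ2 - (x - μ) ^ 2 / (2 * σ2 ^ 2)}
      = gaussianReal 0 1
          {z : ℝ | z ^ 2 < 2 * σ1 ^ 2 * Real.log (σ2 / σ1) / (σ2 ^ 2 - σ1 ^ 2)} := by
  have h2 : (0:ℝ) < σ2 := h1.trans h12
  have hmap : gaussianReal μ ⟨σ2 ^ 2, sq_nonneg σ2⟩
      = (gaussianReal 0 1).map (fun z => σ2 * z + μ) := by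
    have h1' : (gaussianReal 0 1).map (σ2 * ·) = gaussianReal 0 ⟨σ2 ^ 2, sq_nonneg σ2⟩ := by
      rw [gaussianReal_map_const_mul]
      congr 1 <;> simp
      rfl
    have : (fun z => σ2 * z + μ) = (· + μ) ∘ (σ2 * ·) := rfl
    rw [this, ← MeasureTheory.Measure.map_map (by fun_prop) (by fun_prop), h1']
    erw [gaussianReal_map_add_const, zero_add]
  rw [hmap, MeasureTheory.Measure.map_apply (by fun_prop)]
  · congr 1
    ext z
    simp only [Set.mem_preimage, Set.mem_setOf_eq, add_sub_cancel_right, mul_pow, gt_iff_lt]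
    have hs1 : (0:ℝ) < σ1 ^ 2 := by positivity
    have hs2 : (0:ℝ) < σ2 ^ 2 := by positivity
    have hd : (0:ℝ) < σ2 ^ 2 - σ1 ^ 2 := by nlinarith
    have hA : σ2^2*z^2/(2*σ1^2) * (2*σ1^2) = σ2^2*z^2 := by field_simp
    have hz : σ2^2*z^2/(2*σ2^2) = z^2/2 := by field_simp
    rw [Real.log_div (ne_of_gt h2) (ne_of_gt h1), lt_div_iff₀ hd, hz]
    constructor <;> intro h <;> nlinarith [hA, hs1]
  · exact measurableSet_lt (by fun_prop) (by fun_prop)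
end
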